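/- If q : ℝ → ℝ^n solves q'' = -∇V(q), is periodic with period T > 0, and has a brake instant at t = 0 (q'(0) = 0), then t = T/2 is also a brake instant: q'(T/2) = 0. -/

import Mathlib

/-- `q` is a (C²) solution of Newton's equation `q'' = -∇V(q)`. -/
def IsSol {n : ℕ} (V : EuclideanSpace ℝ (Fin n) → ℝ)
    (q : ℝ → EuclideanSpace ℝ (Fin n)) : Prop :=
  ContDiff ℝ 2 q ∧ ∀ t, deriv (deriv q) t = -gradient V (q t)

/-- A `T`-periodic solution with a brake instant at `t = 0` also brakes at `t = T/2`. -/
theorem stmt2 {n : ℕ} (V : EuclideanSpace ℝ (Fin n) → ℝ) (hV : ContDiff ℝ 2 V)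
    (huniq : ∀ p r : ℝ → EuclideanSpace ℝ (Fin n), IsSol V p → IsSol V r →
      p 0 = r 0 → deriv p 0 = deriv r 0 → p = r)
    (q : ℝ → EuclideanSpace ℝ (Fin n)) (hq : IsSol V q)
    (T : ℝ) (hT : 0 < T) (hper : ∀ t, q (t + T) = q t)
    (hbrake : deriv q 0 = 0) :
    deriv q (T / 2) = 0 := by
  set r : ℝ → EuclideanSpace ℝ (Fin n) := fun t => q (-t) with hr
  have hdr : deriv r = fun t => -deriv q (-t) := by
    funext t; exact deriv_comp_neg q t
  have hrsol : IsSol V r := by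
    constructor
    · exact hq.1.comp contDiff_neg
    · intro t
      rw [hdr]
      rw [deriv.fun_neg, deriv_comp_neg (deriv q) t, neg_neg, hq.2]
  have heq : q = r := huniq q r hq hrsol (by simp [hr]) (by rw [hdr]; simp [hbrake])
  -- q is even: q t = q (-t)
  have heven : ∀ t, deriv q t = -deriv q (-t) := by
    intro t
    conv_lhs => rw [heq, hdr]
  -- periodicity of deriv
  have hper' : ∀ t, deriv q (t + T) = deriv q t := by
    intro t
    have : deriv (fun s => q (s + T)) t = deriv q t := by
      congr 1; funext s; exact hper s
    rw [← this, deriv_comp_add_const q T t]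
  have key : deriv q (T / 2) = -deriv q (T / 2) := by
    have h1 := heven (T / 2)
    have h2 := hper' (-(T / 2))
    have : -(T / 2) + T = T / 2 := by ring
    rw [this] at h2
    rw [← h2] at h1
    exact h1
  have h2 : deriv q (T / 2) + deriv q (T / 2) = 0 := by
    nth_rewrite 2 [key]; simp
  have := smul_eq_zero.mp (by rw [two_smul]; exact h2 : (2 : ℝ) • deriv q (T / 2) = 0)
  simpa using this
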